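/- Let R be a commutative ring, let d ≥ 1, c ≥ 1, m ≥ 1 be integers, and let X be an invertible d × d matrix over R. Let B be a (c·d) × ((c−1)·d) matrix and Y₁, Y₂ be (c·d) × d matrices over R. Let M be the square matrix of size (c + 2m)·d defined in block form as follows: the columns are grouped as the (c−1) block columns of B followed by 2m+1 block columns of width d; the first c·d rows consist of B, then Y₁ in the first of the 2m+1 block columns, Y₂ in the last of them, and zeros in between; the remaining 2m·d rows are zero in the block columns of B, and for i = 1, …, 2m the i-th of these block rows has I_d in the i-th of the 2m+1 block columns and X^{ε(i)} in the (i+1)-st, where ε(i) = 1 if i is odd and ε(i) = −1 if i is even, with zeros elsewhere. Then det M = det N, where N is the (c·d) × (c·d) matrix with block columns B and Y₁ + Y₂ placed side by side. -/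

import Mathlib

open Matrix

/-- The bidiagonal band of `2m` block rows and `2m+1` block columns with identity blocks
`I_d` on the diagonal and alternately `X`, `X⁻¹` on the superdiagonal (block row `i`,
`0`-indexed, carries `I_d` in block column `i` and `X` (if `i` is even) or `X⁻¹`
(if `i` is odd) in block column `i+1`). -/
noncomputable def twistBand {R : Type*} [CommRing R] (d m : ℕ) (X : Matrix (Fin d) (Fin d) R) :
    Matrix (Fin (2 * m) × Fin d) (Fin (2 * m + 1) × Fin d) R :=
  fun ir js =>
    if (js.1 : ℕ) = (ir.1 : ℕ) then (1 : Matrix (Fin d) (Fin d) R) ir.2 js.2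
    else if (js.1 : ℕ) = (ir.1 : ℕ) + 1 then
      (if (ir.1 : ℕ) % 2 = 0 then X else X⁻¹) ir.2 js.2
    else 0

/-- The `(c·d) × ((2m+1)·d)` block row with `Y₁` in the first of the `2m+1` block columns,
`Y₂` in the last one, and zeros in between. -/
def twistTop {R : Type*} [CommRing R] (cd d m : ℕ)
    (Y₁ Y₂ : Matrix (Fin cd) (Fin d) R) :
    Matrix (Fin cd) (Fin (2 * m + 1) × Fin d) R :=
  fun r js =>
    if (js.1 : ℕ) = 0 then Y₁ r js.2
    else if (js.1 : ℕ) = 2 * m then Y₂ r js.2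
    else 0

set_option linter.unusedSectionVars false

namespace TwistAux

variable {R : Type*} [CommRing R]

lemma sub_lt' (d k : ℕ) (a : Fin ((k+1)*d)) (h : ¬ (a:ℕ) < k*d) : (a:ℕ) - k*d < d := by
  have h2 := a.2
  have h3 : (k+1)*d = k*d + d := by ring
  omega

/-- `[B | Y]` as a square matrix. -/
def twY (d k : ℕ) (B : Matrix (Fin ((k+1)*d)) (Fin (k*d)) R)
    (Y : Matrix (Fin ((k+1)*d)) (Fin d) R) :
    Matrix (Fin ((k+1)*d)) (Fin ((k+1)*d)) R :=
  fun r a => if h : (a:ℕ) < k*d then B r ⟨a, h⟩ else Y r ⟨(a:ℕ) - k*d, sub_lt' d k a h⟩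

def twQ (d m : ℕ) (cd : ℕ) (Y₂ : Matrix (Fin cd) (Fin d) R) :
    Matrix (Fin cd) (Fin (2*m) × Fin d) R :=
  fun r is => if (is.1:ℕ) + 1 = 2*m then Y₂ r is.2 else 0

def twZ (d k m : ℕ) : Matrix (Fin (2*m) × Fin d) (Fin ((k+1)*d)) R :=
  fun pt a => if (pt.1:ℕ) = 0 ∧ (a:ℕ) = k*d + (pt.2:ℕ) then 1 else 0

noncomputable def twW (d m : ℕ) (X : Matrix (Fin d) (Fin d) R) :
    Matrix (Fin (2*m) × Fin d) (Fin (2*m) × Fin d) R :=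
  fun pt is =>
    (if (is.1:ℕ) + 1 = (pt.1:ℕ) then (1 : Matrix (Fin d) (Fin d) R) pt.2 is.2 else 0)
    + (if (is.1:ℕ) = (pt.1:ℕ) then (if (pt.1:ℕ) % 2 = 0 then X else X⁻¹) pt.2 is.2 else 0)

noncomputable def twC (d k m : ℕ) (X : Matrix (Fin d) (Fin d) R) :
    Matrix (Fin (2*m) × Fin d) (Fin ((k+1)*d)) R :=
  fun is a => if h : (a:ℕ) < k*d then 0 else
    (if (is.1:ℕ) % 2 = 0 then -X⁻¹ else 1) is.2 ⟨(a:ℕ) - k*d, sub_lt' d k a h⟩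

lemma sum_ite_nat_val {n : ℕ} (g : Fin n → R) (P : ℕ → Prop) [DecidablePred P]
    (c : ℕ) (hc : c < n) (hP : ∀ j, j < n → (P j ↔ j = c)) :
    ∑ i : Fin n, (if P (i:ℕ) then g i else 0) = g ⟨c, hc⟩ := by
  have h : ∀ i : Fin n, (if P (i:ℕ) then g i else 0) = (if i = ⟨c,hc⟩ then g i else 0) := by
    intro i
    by_cases h : P (i:ℕ)
    · rw [if_pos h, if_pos (Fin.ext (((hP i i.2).mp h)))]
    · rw [if_neg h, if_neg (fun hh => h ((hP i i.2).mpr (by rw [hh])))]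
  rw [Finset.sum_congr rfl (fun i _ => h i), Finset.sum_ite_eq' Finset.univ (⟨c,hc⟩:Fin n) g,
    if_pos (Finset.mem_univ _)]

lemma sum_ite_nat_none {n : ℕ} (g : Fin n → R) (P : ℕ → Prop) [DecidablePred P]
    (hP : ∀ j, j < n → ¬ P j) :
    ∑ i : Fin n, (if P (i:ℕ) then g i else 0) = 0 := by
  apply Finset.sum_eq_zero
  intro i _
  rw [if_neg (hP i i.2)]

lemma sum_ite_const {α : Type*} [Fintype α] (c : Prop) [Decidable c] (F : α → R) :
    ∑ s : α, (if c then F s else 0) = if c then ∑ s, F s else 0 := by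
  split_ifs <;> simp

lemma det_submatrix_eq {I J : Type*} [Fintype I] [DecidableEq I] [Fintype J] [DecidableEq J]
    {n : ℕ} (A : Matrix I J R) (e : Fin n ≃ I) (f : Fin n ≃ J) :
    (A.submatrix ⇑e ⇑f).det = (A.submatrix id ⇑(e.symm.trans f)).det := by
  rw [← Matrix.det_submatrix_equiv_self e (A.submatrix id ⇑(e.symm.trans f))]
  congr 1
  ext i j
  simp [Matrix.submatrix_apply]

/-- Column operation identity for the band rows. -/
lemma key_a (d k m : ℕ) (X : Matrix (Fin d) (Fin d) R) (hX : IsUnit X) :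
    twZ d k m + twW d m X * twC d k m X
      = (0 : Matrix (Fin (2*m) × Fin d) (Fin ((k+1)*d)) R) := by
  have hXX : X * X⁻¹ = 1 := mul_nonsing_inv X ((isUnit_iff_isUnit_det X).mp hX)
  ext ⟨p, t⟩ a
  rw [Matrix.add_apply, Matrix.mul_apply, Fintype.sum_prod_type, Matrix.zero_apply]
  by_cases ha : (a:ℕ) < k*d
  · have hz : ¬((p:ℕ) = 0 ∧ (a:ℕ) = k*d + (t:ℕ)) := by
      rintro ⟨-, h2⟩; omega
    rw [twZ, if_neg hz]
    simp only [twC, dif_pos ha, mul_zero, Finset.sum_const_zero, add_zero]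
  · set u : Fin d := ⟨(a:ℕ) - k*d, sub_lt' d k a ha⟩ with hu
    have htC : ∀ (i : Fin (2*m)) (s : Fin d),
        twC d k m X (i, s) a = (if (i:ℕ) % 2 = 0 then -X⁻¹ else 1) s u := by
      intro i s; rw [twC]; rw [dif_neg ha]
    have hsum : ∀ (i : Fin (2*m)),
        ∑ s, twW d m X (p, t) (i, s) * twC d k m X (i, s) a
        = (if (i:ℕ) + 1 = (p:ℕ) then
            ((1 : Matrix (Fin d) (Fin d) R) * (if (i:ℕ) % 2 = 0 then -X⁻¹ else 1)) t u else 0)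
          + (if (i:ℕ) = (p:ℕ) then
            ((if (p:ℕ) % 2 = 0 then X else X⁻¹) * (if (i:ℕ) % 2 = 0 then -X⁻¹ else 1)) t u
            else 0) := by
      intro i
      rw [Matrix.mul_apply, Matrix.mul_apply, ← sum_ite_const, ← sum_ite_const,
        ← Finset.sum_add_distrib]
      apply Finset.sum_congr rfl
      intro s _
      rw [twW, htC, add_mul]
      congr 1 <;> (split_ifs <;> simp)
    rw [Finset.sum_congr rfl (fun i _ => hsum i), Finset.sum_add_distrib,
      sum_ite_nat_val (R := R) _ (fun j => j = (p:ℕ)) (p:ℕ) p.2 (fun j hj => Iff.rfl)]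
    by_cases hp0 : (p:ℕ) = 0
    · rw [sum_ite_nat_none (R := R) _ (fun j => j + 1 = (p:ℕ)) (by omega)]
      have hpe : ((⟨(p:ℕ), p.2⟩ : Fin (2*m)) : ℕ) % 2 = 0 := by simpa using (by omega : (p:ℕ) % 2 = 0)
      rw [if_pos hpe, if_pos (by omega : (p:ℕ) % 2 = 0)]
      have hz : ((p:ℕ) = 0 ∧ (a:ℕ) = k*d + (t:ℕ)) ↔ t = u := by
        rw [Fin.ext_iff]
        simp only [hu, hp0, true_and]
        omega
      rw [twZ, if_congr hz rfl rfl, mul_neg, hXX]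
      simp only [Matrix.neg_apply, Matrix.one_apply]
      split_ifs <;> ring
    · have hz : ¬((p:ℕ) = 0 ∧ (a:ℕ) = k*d + (t:ℕ)) := fun h => hp0 h.1
      rw [twZ, if_neg hz, zero_add,
        sum_ite_nat_val (R := R) _ (fun j => j + 1 = (p:ℕ)) ((p:ℕ) - 1)
          (by omega) (fun j hj => by omega)]
      by_cases hpe : (p:ℕ) % 2 = 0
      · have h1 : ((⟨(p:ℕ) - 1, by omega⟩ : Fin (2*m)) : ℕ) % 2 ≠ 0 := by
          simp only [Fin.val_mk]; omega
        have h2 : ((⟨(p:ℕ), p.2⟩ : Fin (2*m)) : ℕ) % 2 = 0 := by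
          simp only [Fin.val_mk]; exact hpe
        rw [if_neg h1, if_pos h2, if_pos hpe, mul_one, mul_neg, hXX]
        simp only [Matrix.neg_apply, Matrix.one_apply]
        split_ifs <;> ring
      · have h1 : ((⟨(p:ℕ) - 1, by omega⟩ : Fin (2*m)) : ℕ) % 2 = 0 := by
          simp only [Fin.val_mk]; omega
        have h2 : ¬((⟨(p:ℕ), p.2⟩ : Fin (2*m)) : ℕ) % 2 = 0 := by
          simp only [Fin.val_mk]; exact hpe
        rw [if_pos h1, if_neg h2, if_neg hpe, one_mul, mul_one]
        simp only [Matrix.neg_apply]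
        ring


/-- Column operation identity for the top rows. -/
lemma key_b (d k m : ℕ) (hm : 1 ≤ m) (X : Matrix (Fin d) (Fin d) R)
    (B : Matrix (Fin ((k+1)*d)) (Fin (k*d)) R)
    (Y₁ Y₂ : Matrix (Fin ((k+1)*d)) (Fin d) R) :
    twY d k B Y₁ + twQ d m ((k+1)*d) Y₂ * twC d k m X = twY d k B (Y₁ + Y₂) := by
  ext r a
  rw [Matrix.add_apply, Matrix.mul_apply, Fintype.sum_prod_type]
  by_cases ha : (a:ℕ) < k*d
  · simp only [twC, dif_pos ha, mul_zero, Finset.sum_const_zero, twY, dif_pos ha, add_zero]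
  · set u : Fin d := ⟨(a:ℕ) - k*d, sub_lt' d k a ha⟩ with hu
    have hsum : ∀ (i : Fin (2*m)),
        ∑ s, twQ d m ((k+1)*d) Y₂ r (i, s) * twC d k m X (i, s) a
        = (if (i:ℕ) + 1 = 2*m then
            (Y₂ * (if (i:ℕ) % 2 = 0 then -X⁻¹ else 1)) r u else 0) := by
      intro i
      rw [Matrix.mul_apply, ← sum_ite_const]
      apply Finset.sum_congr rfl
      intro s _
      rw [twQ, twC, dif_neg ha]
      split_ifs <;> simp [hu] <;> rfl
    rw [Finset.sum_congr rfl (fun i _ => hsum i),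
      sum_ite_nat_val (R := R) _ (fun j => j + 1 = 2*m) (2*m - 1) (by omega)
        (fun j hj => by omega)]
    have h1 : ¬((⟨2*m - 1, by omega⟩ : Fin (2*m)) : ℕ) % 2 = 0 := by
      simp only [Fin.val_mk]; omega
    rw [if_neg h1, Matrix.mul_one, twY, twY, dif_neg ha, dif_neg ha]
    simp [Matrix.add_apply, hu]

/-- Alternating product of determinants. -/
lemma prod_alt (g : ℕ → R) (h2 : ∀ j, g (2*j) * g (2*j+1) = 1) (m : ℕ) :
    ∏ i ∈ Finset.range (2*m), g i = 1 := by
  induction m with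
  | zero => simp
  | succ m ih =>
    have : 2*(m+1) = (2*m + 1) + 1 := by ring
    rw [this, Finset.prod_range_succ, Finset.prod_range_succ, ih, one_mul, h2]

/-- The band block has determinant 1. -/
lemma key_c (d m : ℕ) (hd : 1 ≤ d) (X : Matrix (Fin d) (Fin d) R) (hX : IsUnit X) :
    (twW d m X).det = 1 := by
  have hXX : X * X⁻¹ = 1 := mul_nonsing_inv X ((isUnit_iff_isUnit_det X).mp hX)
  rw [← Matrix.det_transpose]
  have hbt : ((twW d m X)ᵀ).BlockTriangular (fun q : Fin (2*m) × Fin d => q.1) := by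
    intro q r hlt
    have hlt' : (r.1 : ℕ) < (q.1 : ℕ) := hlt
    rw [Matrix.transpose_apply, twW, if_neg (by omega), if_neg (by omega), add_zero]
  rw [hbt.det]
  have himg : Finset.univ.image (fun q : Fin (2*m) × Fin d => q.1) = Finset.univ := by
    apply Finset.eq_univ_iff_forall.mpr
    intro p
    exact Finset.mem_image.mpr ⟨(p, ⟨0, hd⟩), Finset.mem_univ _, rfl⟩
  rw [himg]
  have hblock : ∀ p : Fin (2*m),
      (((twW d m X)ᵀ).toSquareBlock (fun q : Fin (2*m) × Fin d => q.1) p).det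
      = (if (p:ℕ) % 2 = 0 then X else X⁻¹).det := by
    intro p
    let e : Fin d ≃ {q : Fin (2*m) × Fin d // q.1 = p} :=
      { toFun := fun s => ⟨(p, s), rfl⟩
        invFun := fun q => q.1.2
        left_inv := fun s => rfl
        right_inv := by rintro ⟨⟨p', s⟩, h⟩; cases h; rfl }
    rw [← Matrix.det_submatrix_equiv_self e]
    have hsub : (((twW d m X)ᵀ).toSquareBlock
        (fun q : Fin (2*m) × Fin d => q.1) p).submatrix e e
        = (if (p:ℕ) % 2 = 0 then X else X⁻¹)ᵀ := by
      ext s s'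
      simp only [Matrix.submatrix_apply, Matrix.toSquareBlock_def, Matrix.transpose_apply, Matrix.of_apply]
      show twW d m X (p, s') (p, s) = _
      rw [twW]
      simp
    rw [hsub, Matrix.det_transpose]
  rw [Finset.prod_congr rfl (fun p _ => hblock p)]
  rw [Fin.prod_univ_eq_prod_range (fun j => (if j % 2 = 0 then X else X⁻¹).det) (2*m)]
  apply prod_alt
  intro j
  rw [if_pos (by omega), if_neg (by omega), ← Matrix.det_mul, hXX, Matrix.det_one]


abbrev rowEquiv (d k m : ℕ) : Fin ((k+1)*d + 2*m*d) ≃ (Fin ((k+1)*d) ⊕ Fin (2*m) × Fin d) :=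
  finSumFinEquiv.symm.trans (Equiv.sumCongr (Equiv.refl (Fin ((k + 1) * d))) finProdFinEquiv.symm)

abbrev colEquiv (d k m : ℕ) : Fin (k*d + (2*m+1)*d) ≃ (Fin (k*d) ⊕ Fin (2*m+1) × Fin d) :=
  finSumFinEquiv.symm.trans (Equiv.sumCongr (Equiv.refl (Fin (k * d))) finProdFinEquiv.symm)

lemma hcd (d k m : ℕ) : (k+1)*d + 2*m*d = k*d + (2*m+1)*d := by ring

abbrev sigmaEquiv (d k m : ℕ) :
    (Fin ((k+1)*d) ⊕ Fin (2*m) × Fin d) ≃ (Fin (k*d) ⊕ Fin (2*m+1) × Fin d) :=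
  (rowEquiv d k m).symm.trans ((finCongr (hcd d k m)).trans (colEquiv d k m))

lemma sigma_inl_lt (d k m : ℕ) (a : Fin ((k+1)*d)) (h : (a:ℕ) < k*d) :
    sigmaEquiv d k m (Sum.inl a) = Sum.inl (⟨a, h⟩ : Fin (k*d)) := by
  show (colEquiv d k m) ((finCongr (hcd d k m)) ((rowEquiv d k m).symm (Sum.inl a))) = _
  have step1 : (finCongr (hcd d k m)) ((rowEquiv d k m).symm (Sum.inl a))
      = Fin.castAdd ((2*m+1)*d) (⟨a, h⟩ : Fin (k*d)) := by
    ext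
    simp [rowEquiv]
  rw [step1]
  show Sum.map _ _ (finSumFinEquiv.symm (Fin.castAdd _ _)) = _
  rw [finSumFinEquiv_symm_apply_castAdd]
  rfl

lemma sigma_inl_ge (d k m : ℕ) (a : Fin ((k+1)*d)) (h : ¬ (a:ℕ) < k*d) :
    sigmaEquiv d k m (Sum.inl a)
      = Sum.inr ((⟨0, Nat.succ_pos _⟩ : Fin (2*m+1)), (⟨(a:ℕ) - k*d, sub_lt' d k a h⟩ : Fin d)) := by
  show (colEquiv d k m) ((finCongr (hcd d k m)) ((rowEquiv d k m).symm (Sum.inl a))) = _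
  have step1 : (finCongr (hcd d k m)) ((rowEquiv d k m).symm (Sum.inl a))
      = Fin.natAdd (k*d) (⟨(a:ℕ) - k*d,
          lt_of_lt_of_le (sub_lt' d k a h) (Nat.le_mul_of_pos_left d (Nat.succ_pos _))⟩
          : Fin ((2*m+1)*d)) := by
    ext
    have h2 := a.2
    have h3 : (k+1)*d = k*d + d := by ring
    simp [rowEquiv]
    omega
  rw [step1]
  show Sum.map _ _ (finSumFinEquiv.symm (Fin.natAdd _ _)) = _
  rw [finSumFinEquiv_symm_apply_natAdd]
  refine congrArg Sum.inr ?_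
  rw [Equiv.symm_apply_eq]
  ext
  simp [finProdFinEquiv]

lemma sigma_inr (d k m : ℕ) (i : Fin (2*m)) (s : Fin d) :
    sigmaEquiv d k m (Sum.inr (i, s))
      = Sum.inr ((⟨(i:ℕ)+1, by have := i.2; omega⟩ : Fin (2*m+1)), s) := by
  show (colEquiv d k m) ((finCongr (hcd d k m)) ((rowEquiv d k m).symm (Sum.inr (i, s)))) = _
  have step1 : (finCongr (hcd d k m)) ((rowEquiv d k m).symm (Sum.inr (i, s)))
      = Fin.natAdd (k*d) (finProdFinEquiv ((⟨(i:ℕ)+1, by have := i.2; omega⟩ : Fin (2*m+1)), s)) := by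
    ext
    have h3 : (k+1)*d = k*d + d := by ring
    have h4 : d * ((i:ℕ)+1) = d * i + d := by ring
    simp [rowEquiv, finProdFinEquiv]
    omega
  rw [step1]
  show Sum.map _ _ (finSumFinEquiv.symm (Fin.natAdd _ _)) = _
  rw [finSumFinEquiv_symm_apply_natAdd]
  show Sum.inr (finProdFinEquiv.symm _) = _
  rw [Equiv.symm_apply_apply]


set_option maxHeartbeats 1000000 in
lemma reindexed_eq (d k m : ℕ) (X : Matrix (Fin d) (Fin d) R)
    (B : Matrix (Fin ((k+1)*d)) (Fin (k*d)) R)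
    (Y₁ Y₂ : Matrix (Fin ((k+1)*d)) (Fin d) R) :
    (Matrix.fromBlocks B (twistTop ((k+1)*d) d m Y₁ Y₂)
        (0 : Matrix (Fin (2*m) × Fin d) (Fin (k*d)) R)
        (twistBand d m X)).submatrix id ⇑(sigmaEquiv d k m)
    = Matrix.fromBlocks (twY d k B Y₁) (twQ d m ((k+1)*d) Y₂) (twZ d k m) (twW d m X) := by
  ext x y
  rw [Matrix.submatrix_apply, id_eq]
  rcases x with r | ⟨p, t⟩ <;> rcases y with a | ⟨i, s⟩
  · by_cases h : (a:ℕ) < k*d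
    · rw [sigma_inl_lt d k m a h]
      simp [twY, dif_pos h]
    · rw [sigma_inl_ge d k m a h]
      simp only [Matrix.fromBlocks_apply₁₂, Matrix.fromBlocks_apply₁₁, twistTop, twY, dif_neg h]
      simp
  · rw [sigma_inr d k m i s]
    simp only [Matrix.fromBlocks_apply₁₂, twistTop, twQ]
    have h0 : ¬ ((⟨(i:ℕ)+1, by have := i.2; omega⟩ : Fin (2*m+1)) : ℕ) = 0 := by
      simp
    rw [if_neg h0]
  · by_cases h : (a:ℕ) < k*d
    · rw [sigma_inl_lt d k m a h]
      have hz : ¬((p:ℕ) = 0 ∧ (a:ℕ) = k*d + (t:ℕ)) := by rintro ⟨-, h2⟩; omega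
      simp [twZ, hz]
    · rw [sigma_inl_ge d k m a h]
      simp only [Matrix.fromBlocks_apply₂₁, Matrix.fromBlocks_apply₂₂, twistBand, twZ,
        Fin.val_mk]
      by_cases hp : (p:ℕ) = 0
      · rw [if_pos hp.symm]
        have hc : ((p:ℕ) = 0 ∧ (a:ℕ) = k*d + (t:ℕ))
            ↔ t = (⟨(a:ℕ) - k*d, sub_lt' d k a h⟩ : Fin d) := by
          rw [Fin.ext_iff]
          simp only [hp, true_and, Fin.val_mk]
          omega
        rw [if_congr hc rfl rfl, Matrix.one_apply]
      · rw [if_neg (fun hh => hp hh.symm), if_neg (by omega), if_neg (fun hh => hp hh.1)]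
  · rw [sigma_inr d k m i s]
    simp only [Matrix.fromBlocks_apply₂₂, twistBand, twW, Fin.val_mk]
    by_cases h1 : (i:ℕ) + 1 = (p:ℕ)
    · rw [if_pos h1, if_pos h1, if_neg (by omega), add_zero]
    · rw [if_neg h1, if_neg h1, zero_add]
      by_cases h2 : (i:ℕ) = (p:ℕ)
      · rw [if_pos (by omega), if_pos h2]
      · rw [if_neg (by omega), if_neg h2]


lemma rhs_eq (d k : ℕ) (B : Matrix (Fin ((k+1)*d)) (Fin (k*d)) R)
    (Y : Matrix (Fin ((k+1)*d)) (Fin d) R) (hc2 : (k+1)*d = k*d + d) :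
    (Matrix.fromCols B Y).submatrix id
      (⇑(finSumFinEquiv.symm : Fin (k*d + d) ≃ Fin (k*d) ⊕ Fin d) ∘ ⇑(finCongr hc2))
    = twY d k B Y := by
  ext r a
  rw [Matrix.submatrix_apply, id_eq, Function.comp_apply]
  by_cases h : (a:ℕ) < k*d
  · have h1 : (finCongr hc2) a = Fin.castAdd d (⟨(a:ℕ), h⟩ : Fin (k*d)) := by
      ext; simp
    rw [h1, finSumFinEquiv_symm_apply_castAdd]
    simp [Matrix.fromCols, twY, dif_pos h]
  · have h1 : (finCongr hc2) a = Fin.natAdd (k*d) (⟨(a:ℕ) - k*d, sub_lt' d k a h⟩ : Fin d) := by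
      ext
      have h2 := a.2
      simp
      omega
    rw [h1, finSumFinEquiv_symm_apply_natAdd]
    simp [Matrix.fromCols, twY, dif_neg h]

end TwistAux

open TwistAux

/-- With `c = k + 1 ≥ 1`, `d ≥ 1`, `m ≥ 1`, `X` an invertible `d × d`
matrix, `B` a `(c·d) × ((c−1)·d)` matrix and `Y₁, Y₂` `(c·d) × d` matrices over a
commutative ring `R`, the determinant of the square matrix of size `(c+2m)·d` formed by
the block columns of `B`, then the `2m+1` block columns carrying `Y₁, 0, …, 0, Y₂` in the
first `c·d` rows and the band `I_d, X^{±1}` in the remaining `2m·d` rows, equals the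
determinant of the `(c·d) × (c·d)` matrix with block columns `B` and `Y₁ + Y₂`.
(All identifications of index sets with `Fin` of the appropriate size are the canonical
order-preserving ones.) -/
theorem det_eliminate_twist_band
    {R : Type*} [CommRing R] (d k m : ℕ) (hd : 1 ≤ d) (hm : 1 ≤ m)
    (X : Matrix (Fin d) (Fin d) R) (hX : IsUnit X)
    (B : Matrix (Fin ((k + 1) * d)) (Fin (k * d)) R)
    (Y₁ Y₂ : Matrix (Fin ((k + 1) * d)) (Fin d) R) :
    ((Matrix.fromBlocks B (twistTop ((k + 1) * d) d m Y₁ Y₂)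
        (0 : Matrix (Fin (2 * m) × Fin d) (Fin (k * d)) R) (twistBand d m X)).submatrix
        (⇑(finSumFinEquiv.symm.trans
            (Equiv.sumCongr (Equiv.refl (Fin ((k + 1) * d))) finProdFinEquiv.symm)
            : Fin ((k + 1) * d + 2 * m * d) ≃ _))
        (⇑(finSumFinEquiv.symm.trans
            (Equiv.sumCongr (Equiv.refl (Fin (k * d))) finProdFinEquiv.symm)) ∘
          ⇑(finCongr
            (show (k + 1) * d + 2 * m * d = k * d + (2 * m + 1) * d by ring)))).det =
    ((Matrix.fromCols B (Y₁ + Y₂)).submatrix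
        id
        (⇑(finSumFinEquiv.symm : Fin (k * d + d) ≃ Fin (k * d) ⊕ Fin d) ∘
          ⇑(finCongr (show (k + 1) * d = k * d + d by ring)))).det := by
  rw [← Equiv.coe_trans]
  rw [det_submatrix_eq _ (rowEquiv d k m) ((finCongr (hcd d k m)).trans (colEquiv d k m))]
  rw [reindexed_eq d k m X B Y₁ Y₂, rhs_eq d k B (Y₁ + Y₂)]
  have hdetU : (Matrix.fromBlocks (1 : Matrix (Fin ((k+1)*d)) (Fin ((k+1)*d)) R) 0
      (twC d k m X) (1 : Matrix (Fin (2*m) × Fin d) (Fin (2*m) × Fin d) R)).det = 1 := by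
    rw [Matrix.det_fromBlocks_zero₁₂, Matrix.det_one, Matrix.det_one, one_mul]
  have hmul : (Matrix.fromBlocks (twY d k B Y₁) (twQ d m ((k+1)*d) Y₂)
        (twZ d k m) (twW d m X)) *
      (Matrix.fromBlocks 1 0 (twC d k m X) 1)
      = Matrix.fromBlocks (twY d k B (Y₁ + Y₂)) (twQ d m ((k+1)*d) Y₂) 0 (twW d m X) := by
    rw [Matrix.fromBlocks_multiply]
    simp only [Matrix.mul_one, Matrix.mul_zero, zero_add, add_zero]
    rw [key_b d k m hm X B Y₁ Y₂, key_a d k m X hX]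
  calc (Matrix.fromBlocks (twY d k B Y₁) (twQ d m ((k+1)*d) Y₂) (twZ d k m) (twW d m X)).det
      = (Matrix.fromBlocks (twY d k B Y₁) (twQ d m ((k+1)*d) Y₂) (twZ d k m) (twW d m X)).det
        * (Matrix.fromBlocks 1 0 (twC d k m X) 1).det := by rw [hdetU, mul_one]
    _ = (Matrix.fromBlocks (twY d k B (Y₁ + Y₂)) (twQ d m ((k+1)*d) Y₂) 0 (twW d m X)).det := by
        rw [← Matrix.det_mul, hmul]
    _ = (twY d k B (Y₁ + Y₂)).det * (twW d m X).det := Matrix.det_fromBlocks_zero₂₁ _ _ _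
    _ = (twY d k B (Y₁ + Y₂)).det := by rw [key_c d m hd X hX, mul_one]
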